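/- Maximal ascent direction when x_e = 1 > 0 = y_e: Let (x^r, y^r) be an optimal solution to z(λ^r) with x^r_e = 1 and y^r_e = 0. Define Δ = min{(λ^r)^T y : y ∈ F_kstab, y_e = 1} − (λ^r)^T y^r and ∂ = min{(w−λ^r)^T x : x ∈ F_sp.tree, x_e = 0} − (w−λ^r)^T x^r (both nonnegative, assuming the restricted sets are nonempty). If m := min{Δ, ∂} > 0, then z(λ^r − m·𝔢_e) > z(λ^r), and (x^r, y^r) remains optimal at λ^r − m·𝔢_e but is not the unique optimal solution there. -/

import Mathlib

open Finset

/-- Spanning-tree-side Lagrangean cost `(w − μ)ᵀ x`. -/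
def cTree {m : ℕ} (w μ x : Fin m → ℚ) : ℚ := ∑ i, (w i - μ i) * x i

/-- Stable-set-side Lagrangean cost `μᵀ y`. -/
def cStab {m : ℕ} (μ y : Fin m → ℚ) : ℚ := ∑ i, μ i * y i

/-- The Lagrangean decomposition dual function. -/
def zDual {m : ℕ} (w : Fin m → ℚ) (Fst Fk : Finset (Fin m → ℚ))
    (hFst : Fst.Nonempty) (hFk : Fk.Nonempty) (μ : Fin m → ℚ) : ℚ :=
  Fst.inf' hFst (cTree w μ) + Fk.inf' hFk (cStab μ)


lemma cTree_shift {m : ℕ} (w lam : Fin m → ℚ) (c : ℚ) (e : Fin m) (x : Fin m → ℚ) :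
    cTree w (lam - c • (Pi.single e 1 : Fin m → ℚ)) x = cTree w lam x + c * x e := by
  unfold cTree
  have h : ∀ i, (w i - (lam - c • (Pi.single e 1 : Fin m → ℚ)) i) * x i
      = (w i - lam i) * x i + (if i = e then c else 0) * x i := by
    intro i
    by_cases h : i = e <;> simp [Pi.single_apply, h] <;> ring
  simp only [h, Finset.sum_add_distrib, ite_mul, zero_mul, Finset.sum_ite_eq']
  simp

lemma cStab_shift {m : ℕ} (lam : Fin m → ℚ) (c : ℚ) (e : Fin m) (y : Fin m → ℚ) :
    cStab (lam - c • (Pi.single e 1 : Fin m → ℚ)) y = cStab lam y - c * y e := by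
  unfold cStab
  have h : ∀ i, (lam - c • (Pi.single e 1 : Fin m → ℚ)) i * y i
      = lam i * y i - (if i = e then c else 0) * y i := by
    intro i
    by_cases h : i = e <;> simp [Pi.single_apply, h] <;> ring
  simp only [h, Finset.sum_sub_distrib, ite_mul, zero_mul, Finset.sum_ite_eq']
  simp

set_option maxHeartbeats 1000000 in
/-- Maximal ascent direction when `x_e = 1 > 0 = y_e`
(Theorem 4.3 in the INOC version). -/
theorem stmt15 {m : ℕ} (w lam : Fin m → ℚ) (Fst Fk : Finset (Fin m → ℚ))
    (hFst : Fst.Nonempty) (hFk : Fk.Nonempty)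
    (hFst01 : ∀ x ∈ Fst, ∀ i, x i = 0 ∨ x i = 1)
    (hFk01 : ∀ y ∈ Fk, ∀ i, y i = 0 ∨ y i = 1)
    (e : Fin m) (xr yr : Fin m → ℚ) (hxr : xr ∈ Fst) (hyr : yr ∈ Fk)
    (hxopt : ∀ x ∈ Fst, cTree w lam xr ≤ cTree w lam x)
    (hyopt : ∀ y ∈ Fk, cStab lam yr ≤ cStab lam y)
    (hxe : xr e = 1) (hye : yr e = 0)
    (hK : (Fk.filter (fun y => y e = 1)).Nonempty)
    (hT : (Fst.filter (fun x => x e = 0)).Nonempty)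
    (Δ δ : ℚ)
    (hΔ : Δ = (Fk.filter (fun y => y e = 1)).inf' hK (cStab lam) - cStab lam yr)
    (hδ : δ = (Fst.filter (fun x => x e = 0)).inf' hT (cTree w lam) -
      cTree w lam xr)
    (hpos : 0 < min Δ δ)
    (lam' : Fin m → ℚ)
    (hlam' : lam' = lam - min Δ δ • (Pi.single e 1 : Fin m → ℚ)) :
    zDual w Fst Fk hFst hFk lam < zDual w Fst Fk hFst hFk lam' ∧
    (∀ x ∈ Fst, cTree w lam' xr ≤ cTree w lam' x) ∧
    (∀ y ∈ Fk, cStab lam' yr ≤ cStab lam' y) ∧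
    (∃ x' ∈ Fst, ∃ y' ∈ Fk, (x', y') ≠ (xr, yr) ∧
      (∀ x ∈ Fst, cTree w lam' x' ≤ cTree w lam' x) ∧
      (∀ y ∈ Fk, cStab lam' y' ≤ cStab lam' y)) := by

  set M := min Δ δ with hM
  have hMΔ : M ≤ Δ := min_le_left _ _
  have hMδ : M ≤ δ := min_le_right _ _
  -- shifted costs
  have hct : ∀ x, cTree w lam' x = cTree w lam x + M * x e := by
    intro x; rw [hlam']; exact cTree_shift w lam M e x
  have hcs : ∀ y, cStab lam' y = cStab lam y - M * y e := by
    intro y; rw [hlam']; exact cStab_shift lam M e y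
  -- tree side lower bound
  have htree : ∀ x ∈ Fst, cTree w lam xr + M ≤ cTree w lam' x := by
    intro x hx
    rcases hFst01 x hx e with h0 | h1
    · have hmem : x ∈ Fst.filter (fun x => x e = 0) := Finset.mem_filter.2 ⟨hx, h0⟩
      have hle : (Fst.filter (fun x => x e = 0)).inf' hT (cTree w lam) ≤ cTree w lam x :=
        Finset.inf'_le (cTree w lam) hmem
      rw [hct, h0]
      linarith [hδ, hle]
    · rw [hct, h1]
      have := hxopt x hx; linarith
  -- stab side lower bound
  have hstab : ∀ y ∈ Fk, cStab lam yr ≤ cStab lam' y := by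
    intro y hy
    rcases hFk01 y hy e with h0 | h1
    · rw [hcs, h0]; have := hyopt y hy; linarith
    · have hmem : y ∈ Fk.filter (fun y => y e = 1) := Finset.mem_filter.2 ⟨hy, h1⟩
      have hle : (Fk.filter (fun y => y e = 1)).inf' hK (cStab lam) ≤ cStab lam y :=
        Finset.inf'_le (cStab lam) hmem
      rw [hcs, h1]
      linarith [hΔ, hle, hMΔ]
  have hxr' : cTree w lam' xr = cTree w lam xr + M := by rw [hct, hxe]; ring
  have hyr' : cStab lam' yr = cStab lam yr := by rw [hcs, hye]; ring
  have hxopt' : ∀ x ∈ Fst, cTree w lam' xr ≤ cTree w lam' x := by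
    intro x hx; rw [hxr']; exact htree x hx
  have hyopt' : ∀ y ∈ Fk, cStab lam' yr ≤ cStab lam' y := by
    intro y hy; rw [hyr']; exact hstab y hy
  refine ⟨?_, hxopt', hyopt', ?_⟩
  · -- strict increase of zDual
    have h1 : Fst.inf' hFst (cTree w lam) = cTree w lam xr :=
      le_antisymm (Finset.inf'_le _ hxr) (Finset.le_inf' _ _ hxopt)
    have h2 : Fk.inf' hFk (cStab lam) = cStab lam yr :=
      le_antisymm (Finset.inf'_le _ hyr) (Finset.le_inf' _ _ hyopt)
    have h3 : Fst.inf' hFst (cTree w lam') = cTree w lam xr + M :=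
      le_antisymm (by rw [← hxr']; exact Finset.inf'_le _ hxr)
        (Finset.le_inf' _ _ htree)
    have h4 : Fk.inf' hFk (cStab lam') = cStab lam yr :=
      le_antisymm (by rw [← hyr']; exact Finset.inf'_le _ hyr)
        (Finset.le_inf' _ _ hstab)
    unfold zDual; rw [h1, h2, h3, h4]; linarith
  · rcases le_or_gt Δ δ with hcase | hcase
    · -- M = Δ : alternative stab optimum
      have hMeq : M = Δ := min_eq_left hcase
      obtain ⟨y', hy'mem, hy'eq⟩ := Finset.exists_mem_eq_inf' hK (cStab lam)
      have hy'F : y' ∈ Fk := (Finset.mem_filter.1 hy'mem).1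
      have hy'e : y' e = 1 := (Finset.mem_filter.1 hy'mem).2
      have hy'val : cStab lam' y' = cStab lam yr := by
        rw [hcs, hy'e, hMeq, hΔ, ← hy'eq]; ring
      refine ⟨xr, hxr, y', hy'F, ?_, hxopt', ?_⟩
      · intro h
        have : y' = yr := (Prod.mk.injEq _ _ _ _ ▸ h : _ ∧ _).2
        rw [this, hye] at hy'e; norm_num at hy'e
      · intro y hy; rw [hy'val]; exact hstab y hy
    · -- M = δ : alternative tree optimum
      have hMeq : M = δ := min_eq_right hcase.le
      obtain ⟨x', hx'mem, hx'eq⟩ := Finset.exists_mem_eq_inf' hT (cTree w lam)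
      have hx'F : x' ∈ Fst := (Finset.mem_filter.1 hx'mem).1
      have hx'e : x' e = 0 := (Finset.mem_filter.1 hx'mem).2
      have hx'val : cTree w lam' x' = cTree w lam xr + M := by
        rw [hct, hx'e, hMeq, hδ, ← hx'eq]; ring
      refine ⟨x', hx'F, yr, hyr, ?_, ?_, hyopt'⟩
      · intro h
        have : x' = xr := (Prod.mk.injEq _ _ _ _ ▸ h : _ ∧ _).1
        rw [this, hxe] at hx'e; norm_num at hx'e
      · intro x hx; rw [hx'val, ← hxr']; exact hxopt' x hx
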